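/- For every s ≥ 0 there exists a self-complementary graph on 20s + 17 vertices with a complete minor of order 12s + 10 = ⌊3(20s+17)/5⌋. -/

import Mathlib

/-- `G` has a complete minor of order `m`: there are `m` pairwise disjoint, nonempty,
connected branch sets with an edge of `G` between any two of them. -/
def HasCliqueMinor {V : Type*} (G : SimpleGraph V) (m : ℕ) : Prop :=
  ∃ B : Fin m → Set V,
    (∀ i, (B i).Nonempty) ∧
    (∀ i, (G.induce (B i)).Connected) ∧
    (Pairwise fun i j => Disjoint (B i) (B j)) ∧
    ∀ i j, i ≠ j → ∃ x ∈ B i, ∃ y ∈ B j, G.Adj x y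

/-- The Hadwiger number: the order of the largest complete minor. -/
noncomputable def hadwiger {V : Type*} (G : SimpleGraph V) : ℕ :=
  sSup {m | HasCliqueMinor G m}

/-- The 5-part construction: vertex set `R ⊕ Fin 4 × Fin q`, where parts
`0 = A`, `2 = C` carry `K_q`, parts `1 = B`, `3 = D` are edgeless, `R` carries `X`,
with complete joins `A–B`, `B–R`, `R–D`, `D–C`, `C–A`. -/
def fivePart {R : Type*} (X : SimpleGraph R) (q : ℕ) :
    SimpleGraph (R ⊕ Fin 4 × Fin q) :=
  SimpleGraph.fromRel (fun u v =>
    match u, v with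
    | Sum.inl x, Sum.inl y => X.Adj x y
    | Sum.inl _, Sum.inr (p, _) => p = 1 ∨ p = 3
    | Sum.inr (p, _), Sum.inl _ => p = 1 ∨ p = 3
    | Sum.inr (p, _), Sum.inr (p', _) =>
        (p = p' ∧ (p = 0 ∨ p = 2)) ∨
        (p = 0 ∧ p' = 1) ∨ (p = 2 ∧ p' = 0) ∨ (p = 3 ∧ p' = 2))

open Sum


/-! ### generic helpers -/

lemma induce_pair_connected {V : Type*} {G : SimpleGraph V} {u v : V} (h : G.Adj u v) :
    (G.induce {u, v}).Connected := by
  rw [SimpleGraph.connected_iff]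
  refine ⟨?_, ⟨⟨u, by simp⟩⟩⟩
  have key : ∀ x : ({u, v} : Set V), (G.induce {u, v}).Reachable x ⟨u, by simp⟩ := by
    rintro ⟨x, hx⟩
    rcases hx with rfl | rfl
    · exact SimpleGraph.Reachable.refl _
    · exact SimpleGraph.Adj.reachable (by exact h.symm)
  intro x y
  exact (key x).trans (key y).symm

lemma induce_triple_connected {V : Type*} {G : SimpleGraph V} {u v w : V}
    (h1 : G.Adj u v) (h2 : G.Adj v w) :
    (G.induce {u, v, w}).Connected := by
  rw [SimpleGraph.connected_iff]
  refine ⟨?_, ⟨⟨u, by simp⟩⟩⟩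
  have key : ∀ x : ({u, v, w} : Set V), (G.induce {u, v, w}).Reachable x ⟨v, by simp⟩ := by
    rintro ⟨x, hx⟩
    rcases hx with rfl | rfl | rfl
    · exact SimpleGraph.Adj.reachable (by exact h1)
    · exact SimpleGraph.Reachable.refl _
    · exact SimpleGraph.Adj.reachable (by exact h2.symm)
  intro x y
  exact (key x).trans (key y).symm

lemma hasCliqueMinor_of_equiv {V : Type*} {G : SimpleGraph V} {m : ℕ} {J : Type*}
    (e : Fin m ≃ J) (B : J → Set V)
    (h1 : ∀ j, (B j).Nonempty) (h2 : ∀ j, (G.induce (B j)).Connected)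
    (h3 : Pairwise fun i j => Disjoint (B i) (B j))
    (h4 : ∀ i j, i ≠ j → ∃ x ∈ B i, ∃ y ∈ B j, G.Adj x y) : HasCliqueMinor G m :=
  ⟨B ∘ e, fun i => h1 _, fun i => h2 _,
    fun i j hij => h3 (fun h => hij (e.injective h)),
    fun i j hij => h4 _ _ (fun h => hij (e.injective h))⟩

/-- transfer a clique minor along a graph isomorphism -/
lemma HasCliqueMinor.map {V W : Type*} {G : SimpleGraph V} {H : SimpleGraph W}
    (f : G ≃g H) {m : ℕ} (hm : HasCliqueMinor G m) : HasCliqueMinor H m := by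
  obtain ⟨B, h1, h2, h3, h4⟩ := hm
  refine ⟨fun i => f '' B i, fun i => (h1 i).image f, fun i => ?_, ?_, ?_⟩
  · refine (h2 i).map ⟨fun u => ⟨f u.1, Set.mem_image_of_mem f u.2⟩, ?_⟩ ?_
    · intro u v huv
      exact f.map_rel_iff.mpr huv
    · rintro ⟨y, x, hx, rfl⟩
      exact ⟨⟨x, hx⟩, rfl⟩
  · intro i j hij
    exact (Set.disjoint_image_iff f.injective).mpr (h3 hij)
  · intro i j hij
    obtain ⟨x, hx, y, hy, hxy⟩ := h4 i j hij
    exact ⟨f x, Set.mem_image_of_mem f hx, f y, Set.mem_image_of_mem f hy,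
      f.map_rel_iff.mpr hxy⟩

/-- complement of an isomorphism -/
def isoCompl {V W : Type*} {G : SimpleGraph V} {H : SimpleGraph W} (f : G ≃g H) :
    Gᶜ ≃g Hᶜ where
  toEquiv := f.toEquiv
  map_rel_iff' := by
    intro a b
    simp only [SimpleGraph.compl_adj, ne_eq, EmbeddingLike.apply_eq_iff_eq]
    rw [show H.Adj (f.toEquiv a) (f.toEquiv b) ↔ G.Adj a b from f.map_rel_iff]


/-- edge pattern of a self-complementary `P4` on `Fin 4` (path 0-1-3-2). -/
def P4 (k l : Fin 4) : Prop :=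
  (k = 0 ∧ l = 1) ∨ (k = 1 ∧ l = 0) ∨ (k = 1 ∧ l = 3) ∨ (k = 3 ∧ l = 1) ∨
  (k = 2 ∧ l = 3) ∨ (k = 3 ∧ l = 2)

/-- joins among the four parts `A=0, B=1, C=2, D=3`: `A–B`, `A–C`, `C–D`. -/
def Joins (k l : Fin 4) : Prop :=
  (k = 0 ∧ l = 1) ∨ (k = 1 ∧ l = 0) ∨ (k = 0 ∧ l = 2) ∨ (k = 2 ∧ l = 0) ∨
  (k = 2 ∧ l = 3) ∨ (k = 3 ∧ l = 2)

instance (k l : Fin 4) : Decidable (P4 k l) := by unfold P4; infer_instance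
instance (k l : Fin 4) : Decidable (Joins k l) := by unfold Joins; infer_instance

lemma p4_symm : ∀ k l : Fin 4, P4 k l ↔ P4 l k := by decide
lemma joins_symm : ∀ k l : Fin 4, Joins k l ↔ Joins l k := by decide
lemma evenShift : ∀ k : Fin 4, (k = 0 ∨ k = 2) ↔ ¬(k + 1 = 0 ∨ k + 1 = 2) := by decide
lemma oddShift : ∀ k : Fin 4, (k = 1 ∨ k = 3) ↔ ¬(k + 1 = 1 ∨ k + 1 = 3) := by decide
lemma p4Shift : ∀ k l : Fin 4, k ≠ l → (P4 k l ↔ ¬ P4 (k + 1) (l + 1)) := by decide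
lemma partShift : ∀ k l : Fin 4,
    ((k = l ∧ (k = 0 ∨ k = 2)) ∨ Joins k l) ↔
    ¬((k + 1 = l + 1 ∧ (k + 1 = 0 ∨ k + 1 = 2)) ∨ Joins (k + 1) (l + 1)) := by decide

/-- vertex type: center ⊕ ((X-rows ⊕ part-rows) × Fin 4) -/
abbrev Vtx (s : ℕ) := Unit ⊕ ((Fin (s + 1) ⊕ Fin (4 * s + 3)) × Fin 4)

def SCRel (s : ℕ) : Vtx s → Vtx s → Prop := fun u v =>
  match u, v with
  | inl _, inl _ => False
  | inl _, inr (_, k) => k = 0 ∨ k = 2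
  | inr (_, k), inl _ => k = 0 ∨ k = 2
  | inr (x, k), inr (y, l) =>
    match x, y with
    | inl i, inl j =>
        (i = j ∧ P4 k l) ∨ (i < j ∧ (k = 0 ∨ k = 2)) ∨ (j < i ∧ (l = 0 ∨ l = 2))
    | inl _, inr _ => l = 1 ∨ l = 3
    | inr _, inl _ => k = 1 ∨ k = 3
    | inr _, inr _ => (k = l ∧ (k = 0 ∨ k = 2)) ∨ Joins k l

lemma SCRel_symm (s : ℕ) : ∀ u v, SCRel s u v → SCRel s v u := by
  rintro (⟨⟩ | ⟨x, k⟩) (⟨⟩ | ⟨y, l⟩) h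
  · exact h
  · exact h
  · exact h
  · rcases x with i | t <;> rcases y with j | r
    · rcases h with ⟨rfl, hp⟩ | ⟨h1, h2⟩ | ⟨h1, h2⟩
      · exact Or.inl ⟨rfl, (p4_symm k l).mp hp⟩
      · exact Or.inr (Or.inr ⟨h1, h2⟩)
      · exact Or.inr (Or.inl ⟨h1, h2⟩)
    · exact h
    · exact h
    · rcases h with ⟨rfl, h⟩ | h
      · exact Or.inl ⟨rfl, h⟩
      · exact Or.inr ((joins_symm k l).mp h)

def myG (s : ℕ) : SimpleGraph (Vtx s) where
  Adj u v := u ≠ v ∧ SCRel s u v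
  symm := ⟨fun u v ⟨hne, hr⟩ => ⟨hne.symm, SCRel_symm s u v hr⟩⟩
  loopless := ⟨fun u ⟨hne, _⟩ => hne rfl⟩

/-- the shift equiv -/
def shift (s : ℕ) : Vtx s ≃ Vtx s :=
  Equiv.sumCongr (Equiv.refl Unit)
    (Equiv.prodCongr (Equiv.refl _) (Equiv.addRight (1 : Fin 4)))

lemma rel_shift (s : ℕ) : ∀ u v : Vtx s, u ≠ v →
    (SCRel s u v ↔ ¬ SCRel s (shift s u) (shift s v)) := by
  rintro (⟨⟩ | ⟨x, k⟩) (⟨⟩ | ⟨y, l⟩) hne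
  · exact absurd rfl hne
  · exact evenShift l
  · exact evenShift k
  · rcases x with i | t <;> rcases y with j | r
    · show (i = j ∧ P4 k l) ∨ _ ∨ _ ↔ ¬((i = j ∧ P4 (k+1) (l+1)) ∨ _ ∨ _)
      rcases lt_trichotomy i j with h | rfl | h
      · simp only [h, h.ne, h.asymm, true_and, false_and, or_false, false_or,
          and_false, false_and]
        exact evenShift k
      · have hkl : k ≠ l := fun h => hne (by rw [h])
        simp only [lt_irrefl, true_and, false_and, or_false, false_or]
        exact p4Shift k l hkl
      · simp only [h, h.ne', h.asymm, true_and, false_and, or_false, false_or,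
          and_false]
        exact evenShift l
    · exact oddShift l
    · exact oddShift k
    · exact partShift k l

/-- the self-complement isomorphism -/
def myIso (s : ℕ) : myG s ≃g (myG s)ᶜ where
  toEquiv := shift s
  map_rel_iff' := by
    intro a b
    simp only [SimpleGraph.compl_adj, myG, ne_eq, EmbeddingLike.apply_eq_iff_eq]
    rcases eq_or_ne a b with rfl | hne
    · simp
    · have key := rel_shift s a b hne
      have hne' : shift s a ≠ shift s b := fun h => hne (by simpa using h)
      constructor
      · rintro ⟨-, h⟩
        exact ⟨hne, by tauto⟩
      · rintro ⟨-, h⟩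
        exact ⟨hne, by tauto⟩

/-! ### branch sets for the clique minor -/

def partV (s : ℕ) (t : Fin (4 * s + 3)) (k : Fin 4) : Vtx s := inr (inr t, k)
def xV (s : ℕ) (i : Fin (s + 1)) (c : Fin 4) : Vtx s := inr (inl i, c)
def ctr (s : ℕ) : Vtx s := inl ()

def Jt (s : ℕ) := Fin (4 * s + 3) ⊕ Fin (4 * s + 3) ⊕ Fin (4 * s + 3) ⊕ Unit

instance (s : ℕ) : Fintype (Jt s) := by unfold Jt; infer_instance

def xrow (s : ℕ) (i : Fin (4 * s + 3)) : Fin (s + 1) := ⟨(i.val + 1) / 4, by omega⟩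
def xcol (s : ℕ) (i : Fin (4 * s + 3)) : Fin 4 := ⟨(i.val + 1) % 4, by omega⟩

def Bset (s : ℕ) : Jt s → Set (Vtx s)
  | inl i => {partV s i 0}
  | inr (inl i) => {partV s i 2}
  | inr (inr (inl i)) => {partV s i 1, xV s (xrow s i) (xcol s i), partV s i 3}
  | inr (inr (inr _)) => {ctr s, xV s 0 0}

def classify (s : ℕ) : Vtx s → Jt s
  | inl _ => inr (inr (inr ()))
  | inr (inl i, c) =>
      if h : i.val = 0 ∧ c.val = 0 then inr (inr (inr ()))
      else inr (inr (inl ⟨i.val * 4 + c.val - 1, by omega⟩))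
  | inr (inr t, k) =>
      if k = 0 then inl t else if k = 2 then inr (inl t) else inr (inr (inl t))

lemma classify_Bset (s : ℕ) : ∀ j, ∀ a ∈ Bset s j, classify s a = j := by
  rintro (i | i | i | ⟨⟩) a ha
  · rw [show a = partV s i 0 from ha]
    simp [classify, partV]
    rfl
  · rw [show a = partV s i 2 from ha]
    simp [classify, partV]
    rfl
  · rcases ha with rfl | rfl | rfl
    · simp [classify, partV]
      rfl
    · have h1 : ¬((xrow s i).val = 0 ∧ (xcol s i).val = 0) := by
        simp only [xrow, xcol]
        omega
      simp only [classify, xV, dif_neg h1]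
      refine (dif_neg h1).trans ?_
      congr 1
      congr 1
      congr 1
      apply Fin.ext
      simp only [xrow, xcol]
      omega
    · simp [classify, partV]
      rfl
  · rcases ha with rfl | rfl
    · simp [classify, ctr]
      rfl
    · simp [classify, xV]
      rfl

/-! adjacency facts -/

section adj
variable (s : ℕ)

lemma adj_AA {t r : Fin (4 * s + 3)} (h : t ≠ r) :
    (myG s).Adj (partV s t 0) (partV s r 0) :=
  ⟨by simp [partV, h], Or.inl ⟨rfl, Or.inl rfl⟩⟩

lemma adj_CC {t r : Fin (4 * s + 3)} (h : t ≠ r) :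
    (myG s).Adj (partV s t 2) (partV s r 2) :=
  ⟨by simp [partV, h], Or.inl ⟨rfl, Or.inr rfl⟩⟩

lemma adj_AC (t r : Fin (4 * s + 3)) :
    (myG s).Adj (partV s t 0) (partV s r 2) :=
  ⟨by simp [partV], Or.inr (by decide)⟩

lemma adj_AB (t r : Fin (4 * s + 3)) :
    (myG s).Adj (partV s t 0) (partV s r 1) :=
  ⟨by simp [partV], Or.inr (by decide)⟩

lemma adj_CD (t r : Fin (4 * s + 3)) :
    (myG s).Adj (partV s t 2) (partV s r 3) :=
  ⟨by simp [partV], Or.inr (by decide)⟩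

lemma adj_XB (i : Fin (s + 1)) (c : Fin 4) (t : Fin (4 * s + 3)) :
    (myG s).Adj (xV s i c) (partV s t 1) :=
  ⟨by simp [partV, xV], Or.inl rfl⟩

lemma adj_XD (i : Fin (s + 1)) (c : Fin 4) (t : Fin (4 * s + 3)) :
    (myG s).Adj (xV s i c) (partV s t 3) :=
  ⟨by simp [partV, xV], Or.inr rfl⟩

lemma adj_ctrA (t : Fin (4 * s + 3)) :
    (myG s).Adj (ctr s) (partV s t 0) :=
  ⟨by simp [partV, ctr], Or.inl rfl⟩

lemma adj_ctrC (t : Fin (4 * s + 3)) :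
    (myG s).Adj (ctr s) (partV s t 2) :=
  ⟨by simp [partV, ctr], Or.inr rfl⟩

lemma adj_ctrX (i : Fin (s + 1)) :
    (myG s).Adj (ctr s) (xV s i 0) :=
  ⟨by simp [xV, ctr], Or.inl rfl⟩

end adj

lemma induce_singleton_connected {V : Type*} (G : SimpleGraph V) (v : V) :
    (G.induce {v}).Connected := by
  rw [SimpleGraph.connected_iff]
  refine ⟨fun x y => ?_, ⟨⟨v, rfl⟩⟩⟩
  have hx : x.1 = v := x.2
  have hy : y.1 = v := y.2
  have hxy : x = y := Subtype.ext (hx.trans hy.symm)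
  rw [hxy]

lemma myG_minor (s : ℕ) : HasCliqueMinor (myG s) (12 * s + 10) := by
  have hcard : Fintype.card (Jt s) = 12 * s + 10 := by
    simp [Jt]
    omega
  refine hasCliqueMinor_of_equiv (Fintype.equivFinOfCardEq hcard).symm (Bset s) ?_ ?_ ?_ ?_
  · rintro (i | i | i | ⟨⟩)
    · exact ⟨_, rfl⟩
    · exact ⟨_, rfl⟩
    · exact ⟨_, Or.inl rfl⟩
    · exact ⟨_, Or.inl rfl⟩
  · rintro (i | i | i | ⟨⟩)
    · exact induce_singleton_connected _ _
    · exact induce_singleton_connected _ _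
    · exact induce_triple_connected ((adj_XB s _ _ _).symm) (adj_XD s _ _ _)
    · exact induce_pair_connected (adj_ctrX s 0)
  · intro i j hij
    rw [Set.disjoint_left]
    intro a ha hb
    exact hij ((classify_Bset s i a ha).symm.trans (classify_Bset s j a hb))
  · rintro (i | i | i | ⟨⟩) (j | j | j | ⟨⟩) hne
    · exact ⟨_, rfl, _, rfl, adj_AA s (by rintro rfl; exact hne rfl)⟩
    · exact ⟨_, rfl, _, rfl, adj_AC s i j⟩
    · exact ⟨_, rfl, _, Or.inl rfl, adj_AB s i j⟩
    · exact ⟨_, rfl, _, Or.inl rfl, (adj_ctrA s i).symm⟩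
    · exact ⟨_, rfl, _, rfl, (adj_AC s j i).symm⟩
    · exact ⟨_, rfl, _, rfl, adj_CC s (by rintro rfl; exact hne rfl)⟩
    · exact ⟨_, rfl, _, Or.inr (Or.inr rfl), adj_CD s i j⟩
    · exact ⟨_, rfl, _, Or.inl rfl, (adj_ctrC s i).symm⟩
    · exact ⟨_, Or.inl rfl, _, rfl, (adj_AB s j i).symm⟩
    · exact ⟨_, Or.inr (Or.inr rfl), _, rfl, (adj_CD s j i).symm⟩
    · exact ⟨_, Or.inr (Or.inl rfl), _, Or.inl rfl, adj_XB s _ _ _⟩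
    · exact ⟨_, Or.inl rfl, _, Or.inr rfl, (adj_XB s 0 0 i).symm⟩
    · exact ⟨_, Or.inl rfl, _, rfl, adj_ctrA s j⟩
    · exact ⟨_, Or.inl rfl, _, rfl, adj_ctrC s j⟩
    · exact ⟨_, Or.inr rfl, _, Or.inl rfl, adj_XB s 0 0 j⟩
    · exact absurd rfl hne


/-- for every `s ≥ 0` there is a self-complementary graph on `20s + 17`
vertices with a complete minor of order `12s + 10 = ⌊3(20s+17)/5⌋`. -/
theorem stmt18 (s : ℕ) :
    ∃ G : SimpleGraph (Fin (20 * s + 17)),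
      Nonempty (G ≃g Gᶜ) ∧ HasCliqueMinor G (12 * s + 10) ∧
      12 * s + 10 = 3 * (20 * s + 17) / 5 := by
  have hcard : Fintype.card (Vtx s) = 20 * s + 17 := by
    simp [Vtx]
    omega
  let e : Vtx s ≃ Fin (20 * s + 17) := Fintype.equivFinOfCardEq hcard
  refine ⟨(myG s).comap ⇑e.symm, ⟨?_⟩, ?_, by omega⟩
  all_goals {
    have iso : myG s ≃g (myG s).comap ⇑e.symm :=
      { toEquiv := e
        map_rel_iff' := by
          intro a b
          simp [SimpleGraph.comap] }
    first
      | exact (iso.symm.trans (myIso s)).trans (isoCompl iso)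
      | exact (myG_minor s).map iso }
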